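/- Let (x₁,y₁),…,(x_N,y_N) be training data with xₙ ∈ ℝ^p and yₙ ∈ {−1,+1}, let C ≥ 0, d ∈ [0, 1/2] and μ > 0, and let R be the regularized double-ramp risk. Then for every w ∈ ℝ^p, b ∈ ℝ and every ρ < 0, reflecting the bandwidth does not increase the risk: R(w, b, ρ) ≥ R(w, b, −ρ). -/

import Mathlib

/-- The double ramp loss on margin `t` with rejection cost `d`, slope `μ`, bandwidth `ρ`. -/
noncomputable def LDR (d μ ρ t : ℝ) : ℝ :=
  d / μ * (max 0 (μ - t + ρ) - max 0 (-μ^2 - t + ρ))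
    + (1 - d) / μ * (max 0 (μ - t - ρ) - max 0 (-μ^2 - t - ρ))

/-- The regularized double-ramp risk for training data `x, y`. -/
noncomputable def regRisk {N p : ℕ} (x : Fin N → EuclideanSpace ℝ (Fin p))
    (y : Fin N → ℝ) (C d μ : ℝ) (w : EuclideanSpace ℝ (Fin p)) (b ρ : ℝ) : ℝ :=
  (1/2) * ‖w‖^2 + C * ∑ n, LDR d μ ρ (y n * ((inner ℝ w (x n) : ℝ) + b))

private lemma ramp_mono {μ : ℝ} (hμ : 0 < μ) {a b : ℝ} (hab : a ≤ b) :
    max 0 (μ - b) - max 0 (-μ^2 - b) ≤ max 0 (μ - a) - max 0 (-μ^2 - a) := by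
  rcases max_cases 0 (μ - a) with ⟨h1, h1'⟩ | ⟨h1, h1'⟩ <;>
  rcases max_cases 0 (μ - b) with ⟨h2, h2'⟩ | ⟨h2, h2'⟩ <;>
  rcases max_cases 0 (-μ^2 - a) with ⟨h3, h3'⟩ | ⟨h3, h3'⟩ <;>
  rcases max_cases 0 (-μ^2 - b) with ⟨h4, h4'⟩ | ⟨h4, h4'⟩ <;>
  rw [h1, h2, h3, h4] <;>
  nlinarith [sq_nonneg μ, mul_pos hμ hμ]

private lemma LDR_mono {d μ ρ : ℝ} (hd0 : 0 ≤ d) (hd2 : d ≤ 1/2) (hμ : 0 < μ)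
    (hρ : ρ < 0) (t : ℝ) : LDR d μ (-ρ) t ≤ LDR d μ ρ t := by
  have h1 : μ - t + ρ = μ - (t - ρ) := by ring
  have hAB : max 0 (μ - (t - ρ)) - max 0 (-μ^2 - (t - ρ))
      ≤ max 0 (μ - (t + ρ)) - max 0 (-μ^2 - (t + ρ)) :=
    ramp_mono hμ (by linarith)
  have key : (0:ℝ) ≤ ((1 - 2*d)/μ) *
      ((max 0 (μ - (t + ρ)) - max 0 (-μ^2 - (t + ρ)))
        - (max 0 (μ - (t - ρ)) - max 0 (-μ^2 - (t - ρ)))) :=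
    mul_nonneg (div_nonneg (by linarith) hμ.le) (by linarith)
  have e1 : μ - t + ρ = μ - (t - ρ) := by ring
  have e2 : -μ^2 - t + ρ = -μ^2 - (t - ρ) := by ring
  have e3 : μ - t - ρ = μ - (t + ρ) := by ring
  have e4 : -μ^2 - t - ρ = -μ^2 - (t + ρ) := by ring
  have e1' : μ - t + -ρ = μ - (t + ρ) := by ring
  have e2' : -μ^2 - t + -ρ = -μ^2 - (t + ρ) := by ring
  have e3' : μ - t - -ρ = μ - (t - ρ) := by ring
  have e4' : -μ^2 - t - -ρ = -μ^2 - (t - ρ) := by ring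
  unfold LDR
  rw [e1, e2, e3, e4, e1', e2', e3', e4']
  set A := max 0 (μ - (t - ρ)) - max 0 (-μ^2 - (t - ρ)) with hA
  set B := max 0 (μ - (t + ρ)) - max 0 (-μ^2 - (t + ρ)) with hB
  have : d / μ * B + (1 - d) / μ * A ≤ d / μ * A + (1 - d) / μ * B := by
    have : ((1 - 2*d)/μ) * (B - A) = (d / μ * A + (1 - d) / μ * B)
        - (d / μ * B + (1 - d) / μ * A) := by field_simp; ring
    linarith [key.trans_eq this]
  exact this

theorem stmt_7 {N p : ℕ} (x : Fin N → EuclideanSpace ℝ (Fin p)) (y : Fin N → ℝ)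
    (hy : ∀ n, y n = -1 ∨ y n = 1) (C d μ : ℝ) (hC : 0 ≤ C)
    (hd : d ∈ Set.Icc (0 : ℝ) (1/2)) (hμ : 0 < μ)
    (w : EuclideanSpace ℝ (Fin p)) (b ρ : ℝ) (hρ : ρ < 0) :
    regRisk x y C d μ w b (-ρ) ≤ regRisk x y C d μ w b ρ := by
  unfold regRisk
  gcongr
  exact LDR_mono hd.1 hd.2 hμ hρ _
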